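/- The double integral (1/2)·∫₀^{π/2} (1/sin α)·(∫₀^α dβ/cos β) dα equals π²/8. -/

import Mathlib

open Real

lemma odd_sq_sum : HasSum (fun k : ℕ => (1:ℝ)/(2*(k:ℝ)+1)^2) (π^2/8) := by
  have hz : HasSum (fun n : ℕ => (1:ℝ) / (n : ℝ) ^ 2) (π ^ 2 / 6) := hasSum_zeta_two
  have heven : HasSum (fun k : ℕ => (1:ℝ) / ((2*k : ℕ) : ℝ) ^ 2) (π^2/24) := by
    have h := hz.mul_left (1/4)
    have he : (fun k : ℕ => (1/4) * ((1:ℝ)/(k:ℝ)^2)) = fun k : ℕ => (1:ℝ)/((2*k:ℕ):ℝ)^2 := by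
      funext k
      push_cast
      rw [mul_pow, div_mul_div_comm, one_mul]
      norm_num
    rw [he] at h
    have : (1/4) * (π^2/6) = π^2/24 := by ring
    rwa [this] at h
  have hg : Summable (fun k : ℕ => (1:ℝ)/((k:ℝ)+1)^2) := by
    have h := (summable_nat_add_iff 1).mpr hz.summable
    have he : (fun n : ℕ => (1:ℝ)/((n+1:ℕ):ℝ)^2) = fun k : ℕ => (1:ℝ)/((k:ℝ)+1)^2 := by
      funext k; push_cast; ring
    rwa [he] at h
  have hsummable : Summable (fun k : ℕ => (1:ℝ) / ((2*k+1 : ℕ) : ℝ) ^ 2) := by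
    refine Summable.of_nonneg_of_le (fun k => by positivity) (fun k => ?_) hg
    apply div_le_div_of_nonneg_left (by norm_num) (by positivity)
    have h1 : ((k:ℝ)+1) ≤ ((2*k+1:ℕ):ℝ) := by push_cast; linarith [Nat.cast_nonneg (α := ℝ) k]
    nlinarith [Nat.cast_nonneg (α := ℝ) k]
  obtain ⟨b, hb⟩ := hsummable
  have htot : HasSum (fun n : ℕ => (1:ℝ) / (n : ℝ) ^ 2) (π^2/24 + b) :=
    HasSum.even_add_odd heven hb
  have hb2 : b = π^2/8 := by
    have := htot.unique hz
    linarith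
  rw [hb2] at hb
  have : (fun k : ℕ => (1:ℝ) / ((2*k+1 : ℕ) : ℝ) ^ 2) = fun k : ℕ => (1:ℝ)/(2*(k:ℝ)+1)^2 := by
    funext k; push_cast; ring
  rwa [this] at hb


noncomputable def fterm (k : ℕ) (α : ℝ) : ℝ :=
  (1/(2*(k:ℝ)+1)) * Real.tan (α/2)^(2*k) * (1/Real.cos (α/2)^2)

lemma fterm_nonneg (k : ℕ) (α : ℝ) : 0 ≤ fterm k α := by
  unfold fterm
  have : 0 ≤ Real.tan (α/2)^(2*k) := by
    rw [pow_mul]; positivity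
  positivity

lemma cos_half_pos {α : ℝ} (hα : α ∈ Set.Icc 0 (π/2)) : 0 < Real.cos (α/2) := by
  apply Real.cos_pos_of_mem_Ioo
  constructor
  · have := Real.pi_pos; simp only [Set.mem_Icc] at hα; linarith [hα.1]
  · simp only [Set.mem_Icc] at hα; linarith [hα.2, Real.pi_pos]

lemma tan_half_lt_one {α : ℝ} (h0 : 0 ≤ α) (h1 : α < π/2) : Real.tan (α/2) < 1 := by
  have := Real.tan_lt_tan_of_nonneg_of_lt_pi_div_two (x := α/2) (y := π/4)
    (by linarith) (by linarith [Real.pi_pos]) (by linarith)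
  rwa [Real.tan_pi_div_four] at this

lemma tan_half_nonneg {α : ℝ} (h0 : 0 ≤ α) (h1 : α ≤ π/2) : 0 ≤ Real.tan (α/2) := by
  exact Real.tan_nonneg_of_nonneg_of_le_pi_div_two (by linarith) (by linarith [Real.pi_pos])

-- derivative of y ↦ tan (y/2)
lemma hasDerivAt_tan_half {α : ℝ} (hc : Real.cos (α/2) ≠ 0) :
    HasDerivAt (fun y : ℝ => Real.tan (y/2)) (1/Real.cos (α/2)^2 * (1/2)) α := by
  have h1 : HasDerivAt (fun y : ℝ => y/2) (1/2) α := by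
    simpa using (hasDerivAt_id α).div_const 2
  have h2 := Real.hasDerivAt_tan hc
  exact h2.comp α h1

-- FTC for each term
lemma ftc_term (k : ℕ) : ∫ α in (0:ℝ)..(π/2), fterm k α = 2/(2*(k:ℝ)+1)^2 := by
  have hderiv : ∀ α ∈ Set.uIcc (0:ℝ) (π/2),
      HasDerivAt (fun y : ℝ => 2 * Real.tan (y/2)^(2*k+1) / (2*(k:ℝ)+1)^2) (fterm k α) α := by
    intro α hα
    rw [Set.uIcc_of_le (by positivity)] at hα
    have hc := cos_half_pos hα
    have h := ((hasDerivAt_tan_half hc.ne').pow (2*k+1)).const_mul 2 |>.div_const ((2*(k:ℝ)+1)^2)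
    refine h.congr_deriv ?_
    symm
    unfold fterm
    have hk : (2*(k:ℝ)+1) ≠ 0 := by positivity
    push_cast
    field_simp
  have hcont : ContinuousOn (fterm k) (Set.uIcc (0:ℝ) (π/2)) := by
    rw [Set.uIcc_of_le (by positivity)]
    unfold fterm
    have htan : ContinuousOn (fun α : ℝ => Real.tan (α/2)) (Set.Icc 0 (π/2)) := by
      intro α hα
      exact (hasDerivAt_tan_half (cos_half_pos hα).ne').continuousAt.continuousWithinAt
    apply ContinuousOn.mul
    · exact continuousOn_const.mul (htan.pow _)
    · apply ContinuousOn.div continuousOn_const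
      · exact ((Real.continuous_cos.comp (continuous_id.div_const 2)).continuousOn).pow 2
      · intro α hα
        exact pow_ne_zero 2 (cos_half_pos hα).ne'
  have := intervalIntegral.integral_eq_sub_of_hasDerivAt hderiv
    (hcont.intervalIntegrable)
  rw [this]
  have h4 : π/2/2 = π/4 := by ring
  rw [h4, Real.tan_pi_div_four]
  norm_num

-- inner integral
lemma inner_integral {α : ℝ} (h : α ∈ Set.Ioo 0 (π/2)) :
    ∫ β in (0:ℝ)..α, 1/Real.cos β
      = Real.log (1 + Real.tan (α/2)) - Real.log (1 - Real.tan (α/2)) := by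
  obtain ⟨h0, h1⟩ := h
  have hsub : ∀ x ∈ Set.uIcc (0:ℝ) α, x ∈ Set.Icc 0 (π/2) ∧ x < π/2 := by
    intro x hx
    rw [Set.uIcc_of_le h0.le] at hx
    exact ⟨⟨hx.1, by linarith [hx.2]⟩, by linarith [hx.2]⟩
  have hderiv : ∀ x ∈ Set.uIcc (0:ℝ) α,
      HasDerivAt (fun y : ℝ => Real.log (1 + Real.tan (y/2)) - Real.log (1 - Real.tan (y/2)))
        (1/Real.cos x) x := by
    intro x hx
    obtain ⟨hxI, hxlt⟩ := hsub x hx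
    have hc := cos_half_pos hxI
    have htlt := tan_half_lt_one hxI.1 hxlt
    have htnn := tan_half_nonneg hxI.1 hxI.2
    have ht := hasDerivAt_tan_half hc.ne'
    have hd1 : HasDerivAt (fun y : ℝ => Real.log (1 + Real.tan (y/2)))
        ((1/Real.cos (x/2)^2 * (1/2)) / (1 + Real.tan (x/2))) x := by
      have := (ht.const_add 1).log (by linarith)
      simpa using this
    have hd2 : HasDerivAt (fun y : ℝ => Real.log (1 - Real.tan (y/2)))
        ((-(1/Real.cos (x/2)^2 * (1/2))) / (1 - Real.tan (x/2))) x := by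
      have := (ht.const_sub 1).log (by linarith)
      simpa using this
    have h := hd1.sub hd2
    refine h.congr_deriv ?_
    symm
    have hcx : Real.cos x = Real.cos (x/2)^2 - Real.sin (x/2)^2 := by
      have hh := Real.cos_two_mul (x/2)
      have h2 := Real.sin_sq_add_cos_sq (x/2)
      rw [(by ring : 2*(x/2) = x)] at hh
      linarith
    have hcxpos : 0 < Real.cos x := by
      rw [hcx]
      have hs : Real.sin (x/2) < Real.cos (x/2) := by
        have := htlt
        rw [Real.tan_eq_sin_div_cos, div_lt_one hc] at this
        exact this
      have hsnn : 0 ≤ Real.sin (x/2) := Real.sin_nonneg_of_nonneg_of_le_pi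
        (by linarith [hxI.1]) (by linarith [hxI.2, Real.pi_pos])
      nlinarith
    rw [Real.tan_eq_sin_div_cos] at *
    rw [hcx]
    have h1t : (0:ℝ) < 1 + Real.sin (x/2)/Real.cos (x/2) := by linarith
    have h2t : (0:ℝ) < 1 - Real.sin (x/2)/Real.cos (x/2) := by linarith
    have hsnn : 0 ≤ Real.sin (x/2) := Real.sin_nonneg_of_nonneg_of_le_pi
      (by linarith [hxI.1]) (by linarith [hxI.2, Real.pi_pos])
    have hne1 : Real.cos (x/2) + Real.sin (x/2) ≠ 0 := by linarith
    have hne2 : Real.cos (x/2) - Real.sin (x/2) ≠ 0 := by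
      intro hcontra
      rw [hcx] at hcxpos
      nlinarith
    have hcs : Real.cos (x/2)^2 - Real.sin (x/2)^2 ≠ 0 := by
      rw [← hcx]; exact hcxpos.ne'
    field_simp [h1t.ne', h2t.ne']
    ring
  have hint : IntervalIntegrable (fun β => 1/Real.cos β) MeasureTheory.volume 0 α := by
    apply ContinuousOn.intervalIntegrable
    apply ContinuousOn.div continuousOn_const Real.continuous_cos.continuousOn
    intro y hy
    obtain ⟨hyI, hylt⟩ := hsub y hy
    exact (Real.cos_pos_of_mem_Ioo ⟨by linarith [hyI.1, Real.pi_pos], hylt⟩).ne'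
  rw [intervalIntegral.integral_eq_sub_of_hasDerivAt hderiv hint]
  norm_num

lemma fterm_contOn (k : ℕ) : ContinuousOn (fterm k) (Set.Icc 0 (π/2)) := by
  unfold fterm
  have htan : ContinuousOn (fun α : ℝ => Real.tan (α/2)) (Set.Icc 0 (π/2)) := by
    intro α hα
    exact (hasDerivAt_tan_half (cos_half_pos hα).ne').continuousAt.continuousWithinAt
  apply ContinuousOn.mul
  · exact continuousOn_const.mul (htan.pow _)
  · apply ContinuousOn.div continuousOn_const
    · exact ((Real.continuous_cos.comp (continuous_id.div_const 2)).continuousOn).pow 2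
    · intro α hα
      exact pow_ne_zero 2 (cos_half_pos hα).ne'

lemma series_rep {α : ℝ} (h : α ∈ Set.Ioo 0 (π/2)) :
    HasSum (fun k => fterm k α)
      ((1/Real.sin α) * (Real.log (1 + Real.tan (α/2)) - Real.log (1 - Real.tan (α/2)))) := by
  obtain ⟨h0, h1⟩ := h
  have hαI : α ∈ Set.Icc 0 (π/2) := ⟨h0.le, h1.le⟩
  have hc := cos_half_pos hαI
  have hs : 0 < Real.sin (α/2) :=
    Real.sin_pos_of_pos_of_lt_pi (by linarith) (by linarith [Real.pi_pos])
  have htlt := tan_half_lt_one h0.le h1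
  have htnn := tan_half_nonneg h0.le h1.le
  have habs : |Real.tan (α/2)| < 1 := by rw [abs_of_nonneg htnn]; exact htlt
  have H := (hasSum_log_sub_log_of_abs_lt_one habs).mul_left (1/Real.sin α)
  have hterm : (fun k : ℕ => (1/Real.sin α) *
      ((2:ℝ) * (1/(2*(k:ℝ)+1)) * Real.tan (α/2)^(2*k+1))) = fun k => fterm k α := by
    funext k
    unfold fterm
    have hsin : Real.sin α = 2 * Real.sin (α/2) * Real.cos (α/2) := by
      have h2 := Real.sin_two_mul (α/2)
      rw [(by ring : 2*(α/2) = α)] at h2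
      exact h2
    rw [hsin, pow_succ, Real.tan_eq_sin_div_cos]
    have hk : (2*(k:ℝ)+1) ≠ 0 := by positivity
    rw [div_pow]
    field_simp
  rwa [hterm] at H

theorem stmt3 :
    (1/2) * ∫ α in (0:ℝ)..(π/2),
      (1 / Real.sin α) * ∫ β in (0:ℝ)..α, 1 / Real.cos β = π ^ 2 / 8 := by
  have h0 : (0:ℝ) ≤ π/2 := by positivity
  have hsum2 : HasSum (fun k : ℕ => (2:ℝ)/(2*(k:ℝ)+1)^2) (π^2/4) := by
    have h := odd_sq_sum.mul_left 2
    have he : (fun k : ℕ => 2 * ((1:ℝ)/(2*(k:ℝ)+1)^2)) = fun k : ℕ => (2:ℝ)/(2*(k:ℝ)+1)^2 := by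
      funext k; rw [mul_one_div]
    rw [he] at h
    have : 2 * (π^2/8) = π^2/4 := by ring
    rwa [this] at h
  have key : (∫ α in (0:ℝ)..(π/2), (1 / Real.sin α) * ∫ β in (0:ℝ)..α, 1 / Real.cos β)
      = π^2/4 := by
    rw [intervalIntegral.integral_of_le h0]
    have hae : (fun α => (1 / Real.sin α) * ∫ β in (0:ℝ)..α, 1 / Real.cos β)
        =ᵐ[MeasureTheory.volume.restrict (Set.Ioc 0 (π/2))]
        (fun α => ∑' k : ℕ, fterm k α) := by
      refine (MeasureTheory.ae_restrict_iff' measurableSet_Ioc).mpr ?_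
      filter_upwards [MeasureTheory.compl_mem_ae_iff.mpr
        (Real.volume_singleton (a := π/2))] with x hx hmem
      have hxo : x ∈ Set.Ioo 0 (π/2) := ⟨hmem.1, lt_of_le_of_ne hmem.2 (by simpa using hx)⟩
      rw [inner_integral hxo, (series_rep hxo).tsum_eq]
    rw [MeasureTheory.integral_congr_ae hae]
    have hmeas : ∀ k : ℕ, MeasureTheory.AEStronglyMeasurable (fterm k)
        (MeasureTheory.volume.restrict (Set.Ioc 0 (π/2))) := fun k =>
      ((fterm_contOn k).mono Set.Ioc_subset_Icc_self).aestronglyMeasurable measurableSet_Ioc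
    have hint : ∀ k : ℕ, MeasureTheory.IntegrableOn (fterm k) (Set.Ioc 0 (π/2)) := fun k =>
      ((fterm_contOn k).integrableOn_Icc).mono_set Set.Ioc_subset_Icc_self
    have hval : ∀ k : ℕ, ∫ a in Set.Ioc (0:ℝ) (π/2), fterm k a = 2/(2*(k:ℝ)+1)^2 := by
      intro k
      rw [← intervalIntegral.integral_of_le h0]
      exact ftc_term k
    have hlint : ∀ k : ℕ, (∫⁻ a in Set.Ioc (0:ℝ) (π/2), ‖fterm k a‖ₑ)
        = ENNReal.ofReal (2/(2*(k:ℝ)+1)^2) := by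
      intro k
      have h1 : (∫⁻ a in Set.Ioc (0:ℝ) (π/2), ‖fterm k a‖ₑ)
          = ∫⁻ a in Set.Ioc (0:ℝ) (π/2), ENNReal.ofReal (fterm k a) :=
        MeasureTheory.lintegral_congr (fun a => Real.enorm_eq_ofReal (fterm_nonneg k a))
      rw [h1, ← MeasureTheory.ofReal_integral_eq_lintegral_ofReal (hint k)
        (MeasureTheory.ae_of_all _ (fun a => fterm_nonneg k a)), hval k]
    rw [MeasureTheory.integral_tsum hmeas ?_]
    · rw [tsum_congr hval]
      exact hsum2.tsum_eq
    · rw [tsum_congr hlint, ← ENNReal.ofReal_tsum_of_nonneg (fun k => by positivity)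
        hsum2.summable]
      exact ENNReal.ofReal_ne_top
  rw [key]
  ring
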